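/- arXiv:2404.15125 — 2 statements merged into one kernel-verified Lean document; each statement's English description precedes it below -/
import Mathlib

section
/- Let k be a field, x ∈ N, and let V be a subfunctor of the N-module P(x). If V is generated in degrees ≤ n with respect to the sum norm, then V admits a presentation Q¹ → Q⁰ → V → 0 (an exact sequence of N-modules) in which Q⁰ is a direct sum of modules P(y) with sum norm of y at most n and Q¹ is a direct sum of modules P(y) with sum norm of y at most 2n. (That is, hd_1(V) ≤ 2·gd(V) with respect to the sum norm.) -/
open CategoryTheory CategoryTheory.Limits

/-- The poset `ℕ →₀ ℕ` of finitely supported sequences of naturals, with pointwise order,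
regarded as a thin category. -/
abbrev NPoset := ℕ →₀ ℕ

/-- The sum norm of `x : ℕ →₀ ℕ` is `∑ i, x i`. -/
def sumNorm (x : NPoset) : ℕ := x.sum fun _ v => v

/-- `P x` is the `k`-linearization of the representable functor `N(x, -)`. -/
noncomputable def Pmod (k : Type) [Field k] (x : NPoset) : NPoset ⥤ ModuleCat k :=
  coyoneda.obj (Opposite.op x) ⋙ ModuleCat.free k

/-- `Q` is a (possibly infinite) direct sum of modules `P y` with `y ∈ S`. -/
def IsDirectSumOfP (k : Type) [Field k] (Q : NPoset ⥤ ModuleCat k) (S : Set NPoset) : Prop :=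
  ∃ (ι : Type) (g : ι → NPoset) (_ : ∀ j, g j ∈ S)
    (incl : ∀ j, Pmod k (g j) ⟶ Q), Nonempty (IsColimit (Cofan.mk Q incl))

/-- `V` is generated in degrees `≤ n` with respect to a norm. -/
def GeneratedInDeg {k : Type} [Field k] (norm : NPoset → ℕ)
    (V : NPoset ⥤ ModuleCat k) (n : ℕ) : Prop :=
  ∀ z : NPoset,
    (⨆ (y : NPoset) (h : y ≤ z) (_ : norm y ≤ n),
      LinearMap.range (V.map (homOfLE h)).hom) = ⊤

/- ### Auxiliary development -/

section Aux

variable {k : Type} [Field k]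

/-- Monotonicity of the sum norm. -/
lemma sumNorm_mono {a b : NPoset} (h : a ≤ b) : sumNorm a ≤ sumNorm b := by
  have hsub : a.support ⊆ b.support := by
    intro i hi
    simp only [Finsupp.mem_support_iff] at hi ⊢
    intro hb
    exact hi (Nat.le_antisymm (hb ▸ (Finsupp.le_def.mp h i)) (Nat.zero_le _))
  calc sumNorm a = ∑ i ∈ b.support, a i := by
        rw [sumNorm, Finsupp.sum_of_support_subset a hsub _ (fun i _ => rfl)]
    _ ≤ ∑ i ∈ b.support, b i := Finset.sum_le_sum (fun i _ => Finsupp.le_def.mp h i)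
    _ = sumNorm b := rfl

lemma sumNorm_sup_le (a b : NPoset) : sumNorm (a ⊔ b) ≤ sumNorm a + sumNorm b := by
  have h1 : a ⊔ b ≤ a + b := by
    rw [Finsupp.le_def]
    intro i
    rw [Finsupp.sup_apply, Finsupp.add_apply]
    exact sup_le (Nat.le_add_right _ _) (Nat.le_add_left _ _)
  have h2 : sumNorm (a + b) = sumNorm a + sumNorm b := by
    rw [sumNorm, sumNorm, sumNorm]
    exact Finsupp.sum_add_index (by simp) (by simp)
  exact (sumNorm_mono h1).trans h2.le

@[simp] lemma mcomp_apply {M N U : ModuleCat k} (f : M ⟶ N) (g : N ⟶ U) (x : M) :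
    (f ≫ g) x = g (f x) := rfl

/-- Application of a natural transformation commutes with the functor maps. -/
lemma nat_app {F G : NPoset ⥤ ModuleCat k} (α : F ⟶ G) {z z' : NPoset} (f : z ⟶ z')
    (u : F.obj z) : α.app z' (F.map f u) = G.map f (α.app z u) := by
  have h := ConcreteCategory.congr_hom (α.naturality f) u
  simpa only [mcomp_apply] using h

/-- The natural transformation `Pmod k y ⟶ W` determined by an element of `W.obj y`. -/
noncomputable def elemHom (W : NPoset ⥤ ModuleCat k) {y : NPoset} (v : W.obj y) :
    Pmod k y ⟶ W where
  app z := ModuleCat.freeDesc (↾fun f : y ⟶ z => W.map f v)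
  naturality z z' f := by
    apply ModuleCat.free_hom_ext
    intro g
    dsimp only
    erw [mcomp_apply, mcomp_apply]
    have h1 : (Pmod k y).map f (ModuleCat.freeMk g) = ModuleCat.freeMk (g ≫ f) :=
      ModuleCat.free_map_apply _ _
    erw [h1, ModuleCat.freeDesc_apply, ModuleCat.freeDesc_apply]
    exact ConcreteCategory.congr_hom (W.map_comp g f) v

@[simp] lemma elemHom_apply (W : NPoset ⥤ ModuleCat k) {y z : NPoset} (v : W.obj y)
    (f : y ⟶ z) : (elemHom W v).app z (ModuleCat.freeMk f) = W.map f v :=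
  ModuleCat.freeDesc_apply _ _

/-- The `Type`-valued functor `z ↦ Σ j, (g j ⟶ z)`. -/
def SigOb {ι : Type} (g : ι → NPoset) : NPoset ⥤ Type where
  obj z := Σ j, (g j ⟶ z)
  map f := ↾fun p => ⟨p.1, p.2 ≫ f⟩
  map_id z := rfl
  map_comp f g' := rfl

/-- The direct sum `⊕ⱼ P (g j)` as a functor. -/
noncomputable def QF (k : Type) [Field k] {ι : Type} (g : ι → NPoset) :
    NPoset ⥤ ModuleCat k :=
  SigOb g ⋙ ModuleCat.free k

def sigIncl {ι : Type} (g : ι → NPoset) (j : ι) :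
    coyoneda.obj (Opposite.op (g j)) ⟶ SigOb g where
  app z := ↾fun f => ⟨j, f⟩
  naturality z z' f := rfl

/-- Inclusion of a summand. -/
noncomputable def QFincl (k : Type) [Field k] {ι : Type} (g : ι → NPoset) (j : ι) :
    Pmod k (g j) ⟶ QF k g :=
  Functor.whiskerRight (sigIncl g j) (ModuleCat.free k)

@[simp] lemma QFincl_apply {ι : Type} (g : ι → NPoset) (j : ι) {z : NPoset}
    (f : g j ⟶ z) :
    (QFincl k g j).app z (ModuleCat.freeMk f) = ModuleCat.freeMk (⟨j, f⟩ : Σ i, (g i ⟶ z)) :=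
  ModuleCat.free_map_apply _ _

@[simp] lemma QF_map_apply {ι : Type} (g : ι → NPoset) {z z' : NPoset} (f : z ⟶ z')
    (p : Σ j, (g j ⟶ z)) :
    (QF k g).map f (ModuleCat.freeMk p) =
      ModuleCat.freeMk (⟨p.1, p.2 ≫ f⟩ : Σ j, (g j ⟶ z')) :=
  ModuleCat.free_map_apply _ _

/-- Descent from the direct sum. -/
noncomputable def QFdesc {ι : Type} {g : ι → NPoset} {W : NPoset ⥤ ModuleCat k}
    (t : ∀ j, Pmod k (g j) ⟶ W) : QF k g ⟶ W where
  app z := ModuleCat.freeDesc (↾fun p : Σ j, (g j ⟶ z) => (t p.1).app z (ModuleCat.freeMk p.2))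
  naturality z z' f := by
    apply ModuleCat.free_hom_ext
    intro p
    dsimp only
    erw [mcomp_apply, mcomp_apply]
    erw [show (QF k g).map f (ModuleCat.freeMk p) =
          ModuleCat.freeMk (⟨p.1, p.2 ≫ f⟩ : Σ j, (g j ⟶ z')) from
        ModuleCat.free_map_apply _ _,
      ModuleCat.freeDesc_apply, ModuleCat.freeDesc_apply]
    have h := nat_app (t p.1) f (ModuleCat.freeMk p.2)
    rw [show (Pmod k (g p.1)).map f (ModuleCat.freeMk p.2) = ModuleCat.freeMk (p.2 ≫ f) from
          ModuleCat.free_map_apply _ _] at h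
    exact h

@[simp] lemma QFdesc_apply {ι : Type} {g : ι → NPoset} {W : NPoset ⥤ ModuleCat k}
    (t : ∀ j, Pmod k (g j) ⟶ W) {z : NPoset} (p : Σ j, (g j ⟶ z)) :
    (QFdesc t).app z (ModuleCat.freeMk p) = (t p.1).app z (ModuleCat.freeMk p.2) :=
  ModuleCat.freeDesc_apply _ _

/-- The cofan on `QF` is a colimit. -/
noncomputable def QFisColimit {ι : Type} (g : ι → NPoset) :
    IsColimit (Cofan.mk (QF k g) (QFincl k g)) := by
  refine mkCofanColimit _ (fun s => QFdesc (fun j => s.inj j)) ?_ ?_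
  · intro s j
    ext z : 2
    apply ModuleCat.free_hom_ext
    intro f
    dsimp only [Cofan.mk_pt, cofan_mk_inj]
    erw [mcomp_apply, QFincl_apply, QFdesc_apply]
    rfl
  · intro s m hm
    ext z : 2
    apply ModuleCat.free_hom_ext
    intro p
    have h1 : ModuleCat.freeMk p = (QFincl k g p.1).app z (ModuleCat.freeMk p.2) := by
      cases p; rw [QFincl_apply]; rfl
    dsimp only
    erw [QFdesc_apply]
    rw [h1]
    have h2 := congrArg (fun α => NatTrans.app α z) (hm p.1)
    exact ConcreteCategory.congr_hom h2 (ModuleCat.freeMk p.2)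

lemma QF_isDirectSum {ι : Type} (g : ι → NPoset) (S : Set NPoset) (hS : ∀ j, g j ∈ S) :
    IsDirectSumOfP k (QF k g) S :=
  ⟨ι, g, hS, QFincl k g, ⟨QFisColimit g⟩⟩

/-- Proportionality in a finsupp over a subsingleton type. -/
lemma subsingleton_finsupp_prop {α : Type} [Subsingleton α] (u w : α →₀ k) (hw : w ≠ 0) :
    ∃ μ : k, u = μ • w := by
  obtain ⟨a, ha⟩ := Finsupp.ne_iff.mp hw
  rw [Finsupp.coe_zero, Pi.zero_apply] at ha
  refine ⟨u a / w a, ?_⟩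
  ext b
  obtain rfl : a = b := Subsingleton.elim _ _
  rw [Finsupp.smul_apply, smul_eq_mul, div_mul_cancel₀ _ ha]

/-- Maps of `Pmod k x` are injective. -/
lemma Pmap_inj (k : Type) [Field k] (x : NPoset) {w z : NPoset} (f : w ⟶ z) :
    Function.Injective ((Pmod k x).map f) := by
  have h : Function.Injective (fun g : (x ⟶ w) => g ≫ f) := fun a b _ => Subsingleton.elim a b
  exact Finsupp.mapDomain_injective h

end Aux

section Subfunctor

variable {k : Type} [Field k] {x : NPoset} {V : NPoset ⥤ ModuleCat k}

/-- Maps of a subfunctor of `Pmod k x` are injective. -/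
lemma Vmap_inj (ν : V ⟶ Pmod k x) (hmono : ∀ z : NPoset, Function.Injective (ν.app z))
    {w z : NPoset} (f : w ⟶ z) : Function.Injective (V.map f) := by
  intro u u' h
  apply hmono w
  apply Pmap_inj k x f
  have h1 := nat_app ν f u
  have h2 := nat_app ν f u'
  rw [← h1, ← h2, h]

/-- Any two elements of a fiber of a subfunctor of `Pmod k x` are proportional. -/
lemma exists_smul_eq (ν : V ⟶ Pmod k x) (hmono : ∀ z : NPoset, Function.Injective (ν.app z))
    {z : NPoset} (u w : V.obj z) (hw : w ≠ 0) : ∃ μ : k, u = μ • w := by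
  have hν : (ν.app z w : (x ⟶ z) →₀ k) ≠ 0 := by
    intro h0
    exact hw (hmono z (by rw [h0, map_zero]))
  obtain ⟨μ, hμ⟩ := subsingleton_finsupp_prop (α := x ⟶ z) (ν.app z u) (ν.app z w) hν
  refine ⟨μ, hmono z ?_⟩
  rw [map_smul]
  exact hμ

end Subfunctor

/-- A generator datum: an element of `V` in a degree of norm at most `n`. -/
structure GenD (k : Type) [Field k] (V : NPoset ⥤ ModuleCat k) (n : ℕ) where
  y : NPoset
  hy : sumNorm y ≤ n
  v : V.obj y

/-- A relation datum between two generators, valid at the join of their degrees. -/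
structure RelD (k : Type) [Field k] (V : NPoset ⥤ ModuleCat k) (n : ℕ) where
  a : GenD k V n
  b : GenD k V n
  c : k
  c' : k
  hrel : c • (V.map (homOfLE (le_sup_left : a.y ≤ a.y ⊔ b.y)) a.v)
       + c' • (V.map (homOfLE (le_sup_right : b.y ≤ a.y ⊔ b.y)) b.v) = 0

section Construction

variable {k : Type} [Field k] (V : NPoset ⥤ ModuleCat k) (n : ℕ)

noncomputable def g0 : GenD k V n → NPoset := fun i => i.y

noncomputable def g1 : RelD k V n → NPoset := fun r => r.a.y ⊔ r.b.y

/-- The presentation map `Q⁰ ⟶ V`. -/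
noncomputable def pHom : QF k (g0 V n) ⟶ V := QFdesc (fun i => elemHom V i.v)

/-- The relation element in `Q⁰` at degree `g1 r`. -/
noncomputable def relE (r : RelD k V n) : (QF k (g0 V n)).obj (g1 V n r) :=
  r.c • ModuleCat.freeMk (⟨r.a, homOfLE le_sup_left⟩ : Σ i, (g0 V n i ⟶ g1 V n r))
  + r.c' • ModuleCat.freeMk (⟨r.b, homOfLE le_sup_right⟩ : Σ i, (g0 V n i ⟶ g1 V n r))

/-- The syzygy map `Q¹ ⟶ Q⁰`. -/
noncomputable def dHom : QF k (g1 V n) ⟶ QF k (g0 V n) :=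
  QFdesc (fun r => elemHom (QF k (g0 V n)) (relE V n r))

lemma pHom_freeMk {z : NPoset} (a : Σ i : GenD k V n, (g0 V n i ⟶ z)) :
    (pHom V n).app z (ModuleCat.freeMk a) = V.map a.2 a.1.v := by
  erw [pHom, QFdesc_apply, elemHom_apply]

lemma pHom_relE (r : RelD k V n) : (pHom V n).app (g1 V n r) (relE V n r) = 0 := by
  erw [relE, map_add, map_smul, map_smul, pHom_freeMk, pHom_freeMk]
  exact r.hrel

lemma dHom_freeMk {z : NPoset} (r : RelD k V n) (f : g1 V n r ⟶ z) :
    (dHom V n).app z (ModuleCat.freeMk (⟨r, f⟩ : Σ s, (g1 V n s ⟶ z))) =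
      r.c • ModuleCat.freeMk (⟨r.a, homOfLE le_sup_left ≫ f⟩ : Σ i, (g0 V n i ⟶ z))
      + r.c' • ModuleCat.freeMk (⟨r.b, homOfLE le_sup_right ≫ f⟩ : Σ i, (g0 V n i ⟶ z)) := by
  erw [dHom, QFdesc_apply, elemHom_apply, relE, map_add, map_smul, map_smul,
    QF_map_apply, QF_map_apply]
  rfl

lemma pd_zero {z : NPoset} (η : (QF k (g1 V n)).obj z) :
    (pHom V n).app z ((dHom V n).app z η) = 0 := by
  have hcomp : (dHom V n).app z ≫ (pHom V n).app z = 0 := by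
    apply ModuleCat.free_hom_ext
    intro p
    erw [mcomp_apply]
    erw [show (dHom V n).app z (ModuleCat.freeMk p)
        = (QF k (g0 V n)).map p.2 (relE V n p.1) from by
      erw [dHom, QFdesc_apply, elemHom_apply]]
    rw [nat_app (pHom V n) p.2 (relE V n p.1), pHom_relE, map_zero]
    rfl
  have := ConcreteCategory.congr_hom hcomp η
  exact this

end Construction

/-- Let `k` be a field and let `V` be a subfunctor of `P x` that is generated in degrees `≤ n`
with respect to the sum norm.  Then `V` admits a presentation `Q¹ → Q⁰ → V → 0` in which `Q⁰`
is a direct sum of modules `P y` with `sumNorm y ≤ n` and `Q¹` is a direct sum of modules `P y`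
with `sumNorm y ≤ 2 * n`.  (That is, `hd₁ V ≤ 2 · gd V`.) -/
theorem stmt6 {k : Type} [Field k] (x : NPoset) (V : NPoset ⥤ ModuleCat k)
    (ν : V ⟶ Pmod k x) (hmono : ∀ z : NPoset, Function.Injective (ν.app z))
    (n : ℕ) (hgen : GeneratedInDeg sumNorm V n) :
    ∃ (Q1 Q0 : NPoset ⥤ ModuleCat k) (d : Q1 ⟶ Q0) (p : Q0 ⟶ V),
      IsDirectSumOfP k Q1 {y | sumNorm y ≤ 2 * n} ∧
      IsDirectSumOfP k Q0 {y | sumNorm y ≤ n} ∧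
      (∀ z : NPoset, Function.Surjective (p.app z)) ∧
      (∀ z : NPoset, Function.Exact (d.app z) (p.app z)) := by
  classical
  refine ⟨QF k (g1 V n), QF k (g0 V n), dHom V n, pHom V n, ?_, ?_, ?_, ?_⟩
  · refine QF_isDirectSum _ _ (fun r => ?_)
    have := (sumNorm_sup_le r.a.y r.b.y).trans (Nat.add_le_add r.a.hy r.b.hy)
    simpa [g1, two_mul] using this
  · exact QF_isDirectSum _ _ (fun i => i.hy)
  · -- surjectivity
    intro z
    rw [← LinearMap.range_eq_top, eq_top_iff, ← hgen z]
    apply iSup_le; intro y; apply iSup_le; intro h; apply iSup_le; intro hy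
    rintro w ⟨v, rfl⟩
    exact ⟨ModuleCat.freeMk (⟨⟨y, hy, v⟩, homOfLE h⟩ : Σ i : GenD k V n, (g0 V n i ⟶ z)),
      pHom_freeMk V n _⟩
  · -- exactness
    intro z
    rw [LinearMap.exact_iff]
    apply le_antisymm
    · -- ker ≤ range
      intro ξ0 hξ0
      suffices hmain : ∀ Ξ : (Σ i : GenD k V n, (g0 V n i ⟶ z)) →₀ k,
          (pHom V n).app z Ξ = 0 → Ξ ∈ LinearMap.range ((dHom V n).app z).hom by
        exact hmain ξ0 hξ0
      intro ξ hξ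
      by_cases hA : ∃ a ∈ ξ.support, V.map a.2 a.1.v ≠ 0
      · obtain ⟨a, haS, ha⟩ := hA
        have hprop : ∀ b : Σ i : GenD k V n, (g0 V n i ⟶ z),
            ∃ μ : k, V.map b.2 b.1.v = μ • V.map a.2 a.1.v := fun b =>
          exists_smul_eq ν hmono _ _ ha
        choose μ hμ using hprop
        have hsup : ∀ b : Σ i : GenD k V n, (g0 V n i ⟶ z),
            b.1.y ⊔ a.1.y ≤ z := fun b => sup_le (leOfHom b.2) (leOfHom a.2)
        -- the relations
        have hrel : ∀ b : Σ i : GenD k V n, (g0 V n i ⟶ z),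
            (ξ b) • (V.map (homOfLE (le_sup_left : b.1.y ≤ b.1.y ⊔ a.1.y)) b.1.v)
            + (-(ξ b * μ b)) • (V.map (homOfLE (le_sup_right : a.1.y ≤ b.1.y ⊔ a.1.y)) a.1.v)
              = 0 := by
          intro b
          apply Vmap_inj ν hmono (homOfLE (hsup b))
          rw [map_add, map_smul, map_smul, map_zero]
          rw [show V.map (homOfLE (hsup b)) (V.map (homOfLE le_sup_left) b.1.v)
              = V.map b.2 b.1.v from by
            rw [← mcomp_apply, ← V.map_comp,
              Subsingleton.elim (homOfLE le_sup_left ≫ homOfLE (hsup b)) b.2]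
            rfl]
          rw [show V.map (homOfLE (hsup b)) (V.map (homOfLE le_sup_right) a.1.v)
              = V.map a.2 a.1.v from by
            rw [← mcomp_apply, ← V.map_comp,
              Subsingleton.elim (homOfLE le_sup_right ≫ homOfLE (hsup b)) a.2]
            rfl]
          rw [hμ b, smul_smul, neg_smul]
          exact add_neg_cancel _
        set r : (Σ i : GenD k V n, (g0 V n i ⟶ z)) → RelD k V n := fun b =>
          ⟨b.1, a.1, ξ b, -(ξ b * μ b), hrel b⟩ with hr
        -- the d-image terms
        have hd : ∀ b : Σ i : GenD k V n, (g0 V n i ⟶ z),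
            (dHom V n).app z (ModuleCat.freeMk (⟨r b, homOfLE (hsup b)⟩ :
              Σ s, (g1 V n s ⟶ z)))
            = ξ b • ModuleCat.freeMk b - (ξ b * μ b) • ModuleCat.freeMk a := by
          intro b
          rw [dHom_freeMk]
          have e1 : (⟨(r b).a, homOfLE le_sup_left ≫ homOfLE (hsup b)⟩ :
              Σ i : GenD k V n, (g0 V n i ⟶ z)) = b :=
            congrArg (Sigma.mk b.1) (Subsingleton.elim _ _)
          have e2 : (⟨(r b).b, homOfLE le_sup_right ≫ homOfLE (hsup b)⟩ :
              Σ i : GenD k V n, (g0 V n i ⟶ z)) = a :=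
            congrArg (Sigma.mk a.1) (Subsingleton.elim _ _)
          erw [e1, e2, neg_smul, ← sub_eq_add_neg]
          rfl
        set σ : (Σ i : GenD k V n, (g0 V n i ⟶ z)) →₀ k :=
          ∑ b ∈ ξ.support.erase a, (dHom V n).app z
            (ModuleCat.freeMk (⟨r b, homOfLE (hsup b)⟩ : Σ s, (g1 V n s ⟶ z))) with hσ
        have hσmem : σ ∈ LinearMap.range ((dHom V n).app z).hom :=
          Submodule.sum_mem _ (fun b _ => ⟨_, rfl⟩)
        have hσ2 : σ = ∑ b ∈ ξ.support.erase a,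
            (ξ b • Finsupp.single b 1 - (ξ b * μ b) • Finsupp.single a 1) := by
          rw [hσ]
          exact Finset.sum_congr rfl (fun b _ => by rw [hd b]; rfl)
        have hσapp : ∀ t : Σ i : GenD k V n, (g0 V n i ⟶ z), t ≠ a →
            σ t = (if t ∈ ξ.support.erase a then ξ t else 0) := by
          intro t ht
          have hterm : ∀ b ∈ ξ.support.erase a,
              ((ξ b • Finsupp.single b (1:k) - (ξ b * μ b) • Finsupp.single a 1 :
                (Σ i : GenD k V n, (g0 V n i ⟶ z)) →₀ k)) t
              = if b = t then ξ b else 0 := by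
            intro b _
            rw [Finsupp.sub_apply, Finsupp.smul_apply, Finsupp.smul_apply,
              Finsupp.single_apply (a := a) (a' := t), if_neg (fun h => ht h.symm),
              smul_zero, sub_zero, Finsupp.single_apply, smul_eq_mul, mul_ite,
              mul_one, mul_zero]
          rw [hσ2, Finsupp.finset_sum_apply, Finset.sum_congr rfl hterm,
            Finset.sum_ite_eq' (ξ.support.erase a) t (fun b => ξ b)]
        have hησ : ξ - σ = Finsupp.single a ((ξ - σ) a) := by
          ext t
          by_cases hta : t = a
          · subst hta; rw [Finsupp.single_apply, if_pos rfl]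
          · rw [Finsupp.single_apply, if_neg (fun h => hta h.symm), Finsupp.sub_apply,
              hσapp t hta]
            by_cases hts : t ∈ ξ.support
            · rw [if_pos (Finset.mem_erase.mpr ⟨hta, hts⟩), sub_self]
            · rw [if_neg (fun h => hts (Finset.mem_of_mem_erase h)),
                Finsupp.notMem_support_iff.mp hts, sub_zero]
        have hpη : (pHom V n).app z (ξ - σ) = 0 := by
          erw [map_sub, hξ]
          erw [hσ, map_sum]
          erw [Finset.sum_congr rfl (fun b _ => pd_zero V n _)]
          simp
        have hps : ∀ c : k, (pHom V n).app z (Finsupp.single a c) = c • V.map a.2 a.1.v := by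
          intro c
          erw [show (Finsupp.single a c : (Σ i : GenD k V n, (g0 V n i ⟶ z)) →₀ k)
              = c • ModuleCat.freeMk a from by
            erw [show (ModuleCat.freeMk a : (Σ i : GenD k V n, (g0 V n i ⟶ z)) →₀ k)
                = Finsupp.single a 1 from rfl, Finsupp.smul_single, smul_eq_mul, mul_one],
            map_smul, pHom_freeMk]
        have hcoeff : (ξ - σ) a = 0 := by
          have h1 : ((ξ - σ) a) • V.map a.2 a.1.v = 0 := by
            erw [← hps, ← hησ]
            exact hpη
          rcases smul_eq_zero.mp h1 with h | h
          · exact h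
          · exact absurd h ha
        have : ξ = σ := by
          have := hησ
          rw [hcoeff, Finsupp.single_zero] at this
          exact sub_eq_zero.mp this
        rw [this]
        exact hσmem
      · -- all images vanish
        push_neg at hA
        have hv : ∀ b ∈ ξ.support, b.1.v = 0 := by
          intro b hb
          apply Vmap_inj ν hmono b.2
          erw [map_zero]
          exact hA b hb
        rw [show ξ = ∑ b ∈ ξ.support, Finsupp.single b (ξ b) from (Finsupp.sum_single ξ).symm]
        apply Submodule.sum_mem
        intro b hb
        have hzero : b.1.v = 0 := hv b hb
        have hbrel : (ξ b) • (V.map (homOfLE (le_sup_left : b.1.y ≤ b.1.y ⊔ b.1.y)) b.1.v)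
            + (0:k) • (V.map (homOfLE (le_sup_right : b.1.y ≤ b.1.y ⊔ b.1.y)) b.1.v) = 0 := by
          rw [hzero]
          simp
        set rb : RelD k V n := ⟨b.1, b.1, ξ b, 0, hbrel⟩ with hrb
        have hsb : g1 V n rb ≤ z := sup_le (leOfHom b.2) (leOfHom b.2)
        refine ⟨ModuleCat.freeMk (⟨rb, homOfLE hsb⟩ : Σ s, (g1 V n s ⟶ z)), ?_⟩
        rw [dHom_freeMk]
        have e1 : (⟨rb.a, homOfLE le_sup_left ≫ homOfLE hsb⟩ :
            Σ i : GenD k V n, (g0 V n i ⟶ z)) = b :=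
          congrArg (Sigma.mk b.1) (Subsingleton.elim _ _)
        erw [e1, zero_smul, add_zero,
          show (ModuleCat.freeMk b : (Σ i : GenD k V n, (g0 V n i ⟶ z)) →₀ k)
            = Finsupp.single b 1 from rfl, Finsupp.smul_single, smul_eq_mul, mul_one]
      -- done
    · -- range ≤ ker
      rintro _ ⟨η, rfl⟩
      rw [LinearMap.mem_ker]
      exact pd_zero V n η
end

section
/- Let k be a field and let 0 → W → P → V → 0 be a short exact sequence of N-modules in which P is a direct sum of finitely many representable modules P(x_1), …, P(x_ω) and the induced map H_0(P) → H_0(V) is an isomorphism. If W is generated in degrees ≤ m with respect to the sum norm, then W admits a presentation Q¹ → Q⁰ → W → 0 in which Q⁰ is a direct sum of modules P(y) with sum norm of y at most m and Q¹ is a direct sum of modules P(y) with sum norm of y at most 2^ω·m. (That is, hd_2(V) ≤ 2^ω·hd_1(V) with respect to the sum norm, where ω = dim_k H_0(V).) -/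
open CategoryTheory CategoryTheory.Limits

/-- The submodule of `V_z` spanned by the images of all transition maps from objects `y < z`;
the zeroth homology `H₀(V)_z` is the quotient of `V_z` by this submodule. -/
noncomputable def radSubmodule {k : Type} [Field k] (V : NPoset ⥤ ModuleCat k) (z : NPoset) :
    Submodule k (V.obj z) :=
  ⨆ (y : NPoset) (h : y < z), LinearMap.range (V.map (homOfLE h.le)).hom

section Auxiliary

variable {k : Type} [Field k]

section FreeMod

variable {ι : Type} (g : ι → NPoset)

/-- The free `NPoset`-module on generators `j : ι` placed in degrees `g j`. -/
noncomputable def FreeMod : NPoset ⥤ ModuleCat k where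
  obj z := ModuleCat.of k (Finsupp.supported k k {j : ι | g j ≤ z})
  map {y z} f := ModuleCat.ofHom (Submodule.inclusion
    (Finsupp.supported_mono (fun j (hj : g j ≤ y) => hj.trans (leOfHom f)) :
      Finsupp.supported k k {j : ι | g j ≤ y} ≤ Finsupp.supported k k {j : ι | g j ≤ z}))
  map_id := by intros; rfl
  map_comp := by intros; rfl

lemma FreeMod_map_coe {y z : NPoset} (f : y ⟶ z) (c : (FreeMod (k := k) g).obj y) :
    ((FreeMod g).map f c).1 = c.1 := rfl

/-- basis element -/
noncomputable def fe (j : ι) (z : NPoset) (hj : g j ≤ z) : (FreeMod (k := k) g).obj z :=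
  ⟨Finsupp.single j 1, Finsupp.single_mem_supported k 1 hj⟩

end FreeMod
section FreeMod2

variable {ι : Type} (g : ι → NPoset)

/-- Extensionality: linear maps out of `(FreeMod g).obj z` agree if they agree on
basis elements. -/
lemma freeExt {z : NPoset} {T : Type} [AddCommGroup T] [Module k T]
    (f f' : (FreeMod (k := k) g).obj z →ₗ[k] T)
    (h : ∀ (j : ι) (hj : g j ≤ z), f (fe g j z hj) = f' (fe g j z hj)) : f = f' := by
  ext c
  obtain ⟨c, hc⟩ := c
  rw [Finsupp.supported_eq_span_single] at hc
  induction hc using Submodule.span_induction with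
  | mem u hu =>
      obtain ⟨j, hj, rfl⟩ := hu
      exact h j hj
  | zero =>
      have : (⟨0, _⟩ : (FreeMod (k := k) g).obj z) = 0 := rfl
      erw [this, map_zero, map_zero]
  | add u v hu hv hu' hv' =>
      have : (⟨u + v, _⟩ : (FreeMod (k := k) g).obj z) =
        ⟨u, by rwa [Finsupp.supported_eq_span_single]⟩ +
        ⟨v, by rwa [Finsupp.supported_eq_span_single]⟩ := rfl
      erw [this, map_add, map_add, hu', hv']
  | smul a u hu hu' =>
      have : (⟨a • u, _⟩ : (FreeMod (k := k) g).obj z) =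
        a • ⟨u, by rwa [Finsupp.supported_eq_span_single]⟩ := rfl
      erw [this, map_smul, map_smul, hu']

end FreeMod2
section Desc

variable {ι : Type} (g : ι → NPoset) (T : NPoset ⥤ ModuleCat k) (t : ∀ j, T.obj (g j))

/-- Auxiliary linear map on the ambient finsupp space. -/
noncomputable def freeAux (z : NPoset) : (ι →₀ k) →ₗ[k] T.obj z :=
  Finsupp.lsum k fun j =>
    if h : g j ≤ z then LinearMap.toSpanSingleton k _ (T.map (homOfLE h) (t j)) else 0

lemma freeAux_single (z : NPoset) (j : ι) (hj : g j ≤ z) (a : k) :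
    freeAux g T t z (Finsupp.single j a) = a • T.map (homOfLE hj) (t j) := by
  simp [freeAux, hj, LinearMap.toSpanSingleton, LinearMap.smulRight]

lemma freeAux_apply (z : NPoset) (c : ι →₀ k) :
    freeAux g T t z c = c.sum fun j a =>
      if h : g j ≤ z then a • T.map (homOfLE h) (t j) else 0 := by
  rw [freeAux, Finsupp.lsum_apply]
  refine Finsupp.sum_congr fun j _ => ?_
  split_ifs with h
  · simp [h, LinearMap.toSpanSingleton, LinearMap.smulRight]
  · simp [h]

end Desc
section Desc2

variable {ι : Type} (g : ι → NPoset) (T : NPoset ⥤ ModuleCat k) (t : ∀ j, T.obj (g j))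

lemma freeAux_natural {y z : NPoset} (f : y ⟶ z) (c : ι →₀ k)
    (hc : c ∈ Finsupp.supported k k {j : ι | g j ≤ y}) :
    T.map f (freeAux g T t y c) = freeAux g T t z c := by
  rw [freeAux_apply, freeAux_apply, map_finsuppSum]
  refine Finsupp.sum_congr fun j hj => ?_
  have hjy : g j ≤ y := (Finsupp.mem_supported k c).1 hc hj
  have hjz : g j ≤ z := hjy.trans (leOfHom f)
  rw [dif_pos hjy, dif_pos hjz, map_smul]
  congr 1
  have h1 : T.map (homOfLE hjy) ≫ T.map f = T.map (homOfLE hjz) := by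
    rw [← T.map_comp]; congr 1
  exact ConcreteCategory.congr_hom h1 (t j)

/-- The natural transformation `FreeMod g ⟶ T` determined by targets `t j`. -/
noncomputable def freeDescNat : FreeMod (k := k) g ⟶ T where
  app z := ModuleCat.ofHom ((freeAux g T t z).comp (Finsupp.supported k k {j : ι | g j ≤ z}).subtype)
  naturality y z f := by
    ext c
    exact (freeAux_natural g T t f c.1 c.2).symm

lemma freeDescNat_fe (z : NPoset) (j : ι) (hj : g j ≤ z) :
    (freeDescNat g T t).app z (fe g j z hj) = T.map (homOfLE hj) (t j) := by
  have : (freeDescNat g T t).app z (fe g j z hj) = freeAux g T t z (Finsupp.single j 1) := rfl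
  rw [this, freeAux_single g T t z j hj, one_smul]

lemma freeDescNat_apply (z : NPoset) (c : (FreeMod (k := k) g).obj z) :
    (freeDescNat g T t).app z c = (c.1).sum fun j a =>
      if h : g j ≤ z then a • T.map (homOfLE h) (t j) else 0 := by
  exact freeAux_apply g T t z c.1

end Desc2
section PmodSec

variable (x : NPoset) (T : NPoset ⥤ ModuleCat k)

/-- Morphism from the representable module determined by an element of `T.obj x`. -/
noncomputable def PmodDesc (t : T.obj x) : Pmod k x ⟶ T where
  app z := ModuleCat.freeDesc (TypeCat.ofHom fun (h : x ⟶ z) => T.map h t)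
  naturality y z f := by
    apply ModuleCat.free_hom_ext
    intro h
    have lhs : ((Pmod k x).map f ≫ ModuleCat.freeDesc (TypeCat.ofHom fun (h : x ⟶ z) => T.map h t))
        (ModuleCat.freeMk h) = T.map (h ≫ f) t := by
      show ModuleCat.freeDesc _ ((ModuleCat.free k).map ((coyoneda.obj (Opposite.op x)).map f)
        (ModuleCat.freeMk h)) = _
      rw [ModuleCat.free_map_apply, ModuleCat.freeDesc_apply]
      rfl
    have rhs : (ModuleCat.freeDesc (TypeCat.ofHom fun (h : x ⟶ y) => T.map h t) ≫ T.map f)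
        (ModuleCat.freeMk h) = T.map (h ≫ f) t := by
      show T.map f (ModuleCat.freeDesc _ (ModuleCat.freeMk h)) = _
      rw [ModuleCat.freeDesc_apply, T.map_comp]
      rfl
    exact lhs.trans rhs.symm

lemma PmodDesc_apply (t : T.obj x) (z : NPoset) (h : x ⟶ z) :
    (PmodDesc x T t).app z (ModuleCat.freeMk h) = T.map h t :=
  ModuleCat.freeDesc_apply _ _

/-- Any morphism out of `Pmod k x` is determined by its value on the canonical generator. -/
lemma Pmod_hom_ext {σ τ : Pmod k x ⟶ T}
    (h : σ.app x (ModuleCat.freeMk (𝟙 x)) = τ.app x (ModuleCat.freeMk (𝟙 x))) : σ = τ := by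
  ext z : 2
  apply ModuleCat.free_hom_ext
  intro f
  have hs := ConcreteCategory.congr_hom (σ.naturality f) (ModuleCat.freeMk (𝟙 x))
  have ht := ConcreteCategory.congr_hom (τ.naturality f) (ModuleCat.freeMk (𝟙 x))
  show σ.app z (ModuleCat.freeMk f) = τ.app z (ModuleCat.freeMk f)
  have key : ∀ υ : Pmod k x ⟶ T, υ.app z ((Pmod k x).map f (ModuleCat.freeMk (𝟙 x)))
      = υ.app z (ModuleCat.freeMk f) := by
    intro υ
    congr 1
    show (ModuleCat.free k).map _ (ModuleCat.freeMk (𝟙 x)) = _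
    rw [ModuleCat.free_map_apply]
    congr 1
  calc σ.app z (ModuleCat.freeMk f) = σ.app z ((Pmod k x).map f (ModuleCat.freeMk (𝟙 x))) :=
        (key σ).symm
    _ = T.map f (σ.app x (ModuleCat.freeMk (𝟙 x))) := hs
    _ = T.map f (τ.app x (ModuleCat.freeMk (𝟙 x))) := by rw [h]
    _ = τ.app z ((Pmod k x).map f (ModuleCat.freeMk (𝟙 x))) := ht.symm
    _ = τ.app z (ModuleCat.freeMk f) := key τ

end PmodSec
section Colim

variable {ι : Type} (g : ι → NPoset)

noncomputable def freeIncl (k : Type) [Field k] (j : ι) : Pmod k (g j) ⟶ FreeMod (k := k) g :=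
  PmodDesc (g j) (FreeMod g) (fe g j (g j) le_rfl)

lemma freeIncl_apply (j : ι) (z : NPoset) (hj : g j ≤ z) :
    (freeIncl g k j).app z (ModuleCat.freeMk (homOfLE hj)) = fe g j z hj := by
  rw [freeIncl, PmodDesc_apply]
  exact Subtype.ext rfl

/-- The cofan exhibiting `FreeMod g` as the direct sum of the `Pmod k (g j)`. -/
noncomputable def freeCofan : Cofan (fun j => Pmod k (g j)) :=
  Cofan.mk (FreeMod (k := k) g) (freeIncl g k)

lemma fe_eq_incl {Q : NPoset ⥤ ModuleCat k} (j : ι) (z : NPoset) (hj : g j ≤ z)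
    {τ : FreeMod (k := k) g ⟶ Q}
    {σ : Pmod k (g j) ⟶ Q} (hτ : freeIncl g k j ≫ τ = σ) :
    τ.app z (fe g j z hj) = σ.app z (ModuleCat.freeMk (homOfLE hj)) := by
  rw [← hτ, NatTrans.comp_app]
  exact (congrArg (τ.app z) (freeIncl_apply g j z hj)).symm

noncomputable def freeIsColimit : IsColimit (freeCofan (k := k) g) := by
  refine mkCofanColimit _
    (fun s => freeDescNat g s.pt (fun j => (s.inj j).app (g j) (ModuleCat.freeMk (𝟙 (g j)))))
    (fun s j => ?_) (fun s σ hσ => ?_)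
  · apply Pmod_hom_ext
    show (freeDescNat g s.pt _).app (g j) ((freeIncl g k j).app (g j) (ModuleCat.freeMk (𝟙 (g j))))
      = _
    have : (𝟙 (g j) : g j ⟶ g j) = homOfLE le_rfl := rfl
    rw [this, freeIncl_apply, freeDescNat_fe, ← this, s.pt.map_id]
    rfl
  · ext z : 2
    apply ModuleCat.hom_ext
    apply freeExt
    intro j hj
    erw [fe_eq_incl g j z hj (hσ j), fe_eq_incl g j z hj]
    apply Pmod_hom_ext
    show (freeDescNat g s.pt _).app (g j) ((freeIncl g k j).app (g j) (ModuleCat.freeMk (𝟙 (g j))))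
      = _
    have : (𝟙 (g j) : g j ⟶ g j) = homOfLE le_rfl := rfl
    rw [this, freeIncl_apply, freeDescNat_fe, ← this, s.pt.map_id]
    rfl

end Colim
section Norm

lemma sumNorm_add (a b : NPoset) : sumNorm (a + b) = sumNorm a + sumNorm b :=
  Finsupp.sum_add_index' (fun _ => rfl) (fun _ _ _ => rfl)

lemma sumNorm_finsetSup_le {ι : Type} (T : Finset ι) (g : ι → NPoset) :
    sumNorm (T.sup g) ≤ ∑ j ∈ T, sumNorm (g j) := by
  classical
  induction T using Finset.induction with
  | empty =>
      show sumNorm (⊥ : NPoset) ≤ 0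
      rw [show (⊥ : NPoset) = 0 from rfl]
      simp [sumNorm]
  | insert _ _ hj ih =>
      rw [Finset.sup_insert, Finset.sum_insert hj]
      exact (sumNorm_sup_le _ _).trans (Nat.add_le_add_left ih _)

end Norm
lemma freeIsDirectSum {ι : Type} (g : ι → NPoset) (S : Set NPoset) (hS : ∀ j, g j ∈ S) :
    IsDirectSumOfP k (FreeMod g) S :=
  ⟨ι, g, hS, freeIncl g k, ⟨freeIsColimit g⟩⟩

lemma iso_app_injective {F G : NPoset ⥤ ModuleCat k} (e : F ≅ G) (z : NPoset) :
    Function.Injective (e.hom.app z) := by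
  intro a b hab
  have h2 : e.hom.app z ≫ e.inv.app z = 𝟙 (F.obj z) := by
    rw [← NatTrans.comp_app, e.hom_inv_id]; rfl
  have ha : e.inv.app z (e.hom.app z a) = a := ConcreteCategory.congr_hom h2 a
  have hb : e.inv.app z (e.hom.app z b) = b := ConcreteCategory.congr_hom h2 b
  rw [← ha, ← hb, hab]

section Main

variable (W P : NPoset ⥤ ModuleCat k) (ρ : W ⟶ P)
  (ω : ℕ) (x : Fin ω → NPoset)
  (incl : ∀ j : Fin ω, Pmod k (x j) ⟶ P)

/-- Transition maps of `W` are injective, given `P` free and `ρ` injective. -/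
lemma W_map_injective (hρ : ∀ z : NPoset, Function.Injective (ρ.app z))
    (hPc : IsColimit (Cofan.mk P incl))
    {y z : NPoset} (f : y ⟶ z) : Function.Injective (W.map f) := by
  have e : P ≅ FreeMod (k := k) x := hPc.coconePointUniqueUpToIso (freeIsColimit x)
  have hPinj : Function.Injective (P.map f) := by
    have hnat : P.map f ≫ e.hom.app z = e.hom.app y ≫ (FreeMod (k := k) x).map f :=
      e.hom.naturality f
    have hcomp : ∀ u : P.obj y, e.hom.app z (P.map f u) =
        (FreeMod (k := k) x).map f (e.hom.app y u) := fun u => ConcreteCategory.congr_hom hnat u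
    intro a b hab
    have h1 : (FreeMod (k := k) x).map f (e.hom.app y a) =
        (FreeMod (k := k) x).map f (e.hom.app y b) := by
      rw [← hcomp, ← hcomp, hab]
    have h2 : e.hom.app y a = e.hom.app y b :=
      Submodule.inclusion_injective
        (Finsupp.supported_mono (fun j (hj : x j ≤ y) => hj.trans (leOfHom f))) h1
    exact iso_app_injective e y h2
  have hnat : W.map f ≫ ρ.app z = ρ.app y ≫ P.map f := ρ.naturality f
  intro a b hab
  apply hρ y
  apply hPinj
  have h1 := ConcreteCategory.congr_hom hnat a
  have h2 := ConcreteCategory.congr_hom hnat b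
  exact h1.symm.trans ((congrArg (ρ.app z) hab).trans h2)

/-- Any family of more than `ω` vectors in `W.obj z` is linearly dependent. -/
lemma W_dep (hρ : ∀ z : NPoset, Function.Injective (ρ.app z))
    (hPc : IsColimit (Cofan.mk P incl)) (z : NPoset)
    (T : Type) [Fintype T] (v : T → W.obj z) (hT : ω < Fintype.card T) :
    ¬ LinearIndependent k v := by
  have e : P ≅ FreeMod (k := k) x := hPc.coconePointUniqueUpToIso (freeIsColimit x)
  intro hli
  let ψ : W.obj z →ₗ[k] (Fin ω →₀ k) :=
    (Finsupp.supported k k {j : Fin ω | x j ≤ z}).subtype.comp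
      ((e.hom.app z).hom.comp (ρ.app z).hom)
  have hψ : LinearMap.ker ψ = ⊥ := by
    rw [LinearMap.ker_eq_bot]
    intro a b hab
    apply hρ z
    apply iso_app_injective e z
    exact Subtype.ext hab
  have hli2 : LinearIndependent k (ψ ∘ v) := hli.map' ψ hψ
  have := hli2.fintype_card_le_finrank
  rw [Module.finrank_finsupp_self, Fintype.card_fin] at this
  omega

end Main

end Auxiliary

/-- Let `0 → W → P → V → 0` be a short exact sequence of `N`-modules over a field `k`, where
`P` is a direct sum of `ω` representables `P (x 1), …, P (x ω)` and the induced map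
`H₀(P) → H₀(V)` is an isomorphism.  If `W` is generated in sum-norm degrees `≤ m`, then `W`
admits a presentation `Q¹ → Q⁰ → W → 0` with `Q⁰` a direct sum of modules `P y`, `sumNorm y ≤ m`,
and `Q¹` a direct sum of modules `P y`, `sumNorm y ≤ 2 ^ ω * m`.
(That is, `hd₂ V ≤ 2 ^ ω · hd₁ V` where `ω = dim_k H₀(V)`.) -/
theorem stmt8 {k : Type} [Field k] (W P V : NPoset ⥤ ModuleCat k)
    (ρ : W ⟶ P) (π : P ⟶ V)
    (hρ : ∀ z : NPoset, Function.Injective (ρ.app z))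
    (hπ : ∀ z : NPoset, Function.Surjective (π.app z))
    (hexact : ∀ z : NPoset, Function.Exact (ρ.app z) (π.app z))
    (ω : ℕ) (x : Fin ω → NPoset)
    (incl : ∀ j : Fin ω, Pmod k (x j) ⟶ P)
    (hP : Nonempty (IsColimit (Cofan.mk P incl)))
    (hH0 : ∀ (z : NPoset) (p : P.obj z),
      π.app z p ∈ radSubmodule V z ↔ p ∈ radSubmodule P z)
    (m : ℕ) (hW : GeneratedInDeg sumNorm W m) :
    ∃ (Q1 Q0 : NPoset ⥤ ModuleCat k) (d : Q1 ⟶ Q0) (p : Q0 ⟶ W),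
      IsDirectSumOfP k Q1 {y | sumNorm y ≤ 2 ^ ω * m} ∧
      IsDirectSumOfP k Q0 {y | sumNorm y ≤ m} ∧
      (∀ z : NPoset, Function.Surjective (p.app z)) ∧
      (∀ z : NPoset, Function.Exact (d.app z) (p.app z)) := by
  classical
  obtain ⟨hPc⟩ := hP
  let ι0 : Type := Σ y : {y : NPoset // sumNorm y ≤ m}, W.obj ↑y
  let g0 : ι0 → NPoset := fun j => ↑j.1
  let Q0 : NPoset ⥤ ModuleCat k := FreeMod g0
  let p : Q0 ⟶ W := freeDescNat g0 W (fun j => j.2)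
  have hpsurj : ∀ z : NPoset, Function.Surjective (p.app z) := by
    intro z
    rw [← LinearMap.range_eq_top, eq_top_iff, ← hW z]
    refine iSup_le fun y => iSup_le fun hyz => iSup_le fun hym => ?_
    rintro w ⟨w', rfl⟩
    exact LinearMap.mem_range.2
      ⟨fe g0 ⟨⟨y, hym⟩, w'⟩ z hyz, freeDescNat_fe g0 W (fun j => j.2) z ⟨⟨y, hym⟩, w'⟩ hyz⟩
  have pnat : ∀ {y z : NPoset} (f : y ⟶ z) (u : Q0.obj y),
      p.app z (Q0.map f u) = W.map f (p.app y u) :=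
    fun f u => ConcreteCategory.congr_hom (p.naturality f) u
  have hWinj : ∀ {y z : NPoset} (f : y ⟶ z), Function.Injective (W.map f) :=
    fun f => W_map_injective W P ρ ω x incl hρ hPc f
  let ι1 : Type := Σ z' : {z' : NPoset // sumNorm z' ≤ 2 ^ ω * m},
    LinearMap.ker (p.app ↑z').hom
  let g1 : ι1 → NPoset := fun j => ↑j.1
  let Q1 : NPoset ⥤ ModuleCat k := FreeMod g1
  let d : Q1 ⟶ Q0 := freeDescNat g1 Q0 (fun j => ↑j.2)
  refine ⟨Q1, Q0, d, p, freeIsDirectSum g1 _ (fun j => j.1.2),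
    freeIsDirectSum g0 _ (fun j => j.1.2), hpsurj, ?_⟩
  intro z
  rw [LinearMap.exact_iff]
  apply le_antisymm
  · -- ker ≤ range : the heart
    intro c hc
    have push : ∀ (z'' : NPoset), sumNorm z'' ≤ 2 ^ ω * m → ∀ (hz''z : z'' ≤ z),
        ∀ (l : ι0 →₀ k) (hl : l ∈ Finsupp.supported k k {j : ι0 | g0 j ≤ z''}),
        p.app z ⟨l, Finsupp.supported_mono (fun j hj => le_trans hj hz''z) hl⟩ = 0 →
        (⟨l, Finsupp.supported_mono (fun j hj => le_trans hj hz''z) hl⟩ : Q0.obj z)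
          ∈ LinearMap.range (d.app z).hom := by
      intro z'' hzM hz''z l hl hker
      have h0 : p.app z'' ⟨l, hl⟩ = 0 := by
        apply hWinj (homOfLE hz''z)
        rw [map_zero]
        have h1 := pnat (homOfLE hz''z) ⟨l, hl⟩
        have h2 : Q0.map (homOfLE hz''z) ⟨l, hl⟩ =
            (⟨l, Finsupp.supported_mono (fun j hj => le_trans hj hz''z) hl⟩ : Q0.obj z) :=
          Subtype.ext rfl
        rw [h2] at h1
        rw [← h1, hker]
      exact ⟨fe g1 ⟨⟨z'', hzM⟩, ⟨⟨l, hl⟩, LinearMap.mem_ker.2 h0⟩⟩ z hz''z,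
        by rw [freeDescNat_fe]; exact Subtype.ext rfl⟩
    have heart : ∀ (n : ℕ) (c : Q0.obj z), c.1.support.card ≤ n → p.app z c = 0 →
        c ∈ LinearMap.range (d.app z).hom := by
      intro n
      induction n with
      | zero =>
          intro c hcard _
          have h1 : c.1 = 0 := by
            rw [← Finsupp.support_eq_empty]
            exact Finset.card_eq_zero.1 (Nat.le_zero.1 hcard)
          have hc0 : c = 0 := Subtype.ext h1
          rw [hc0]; exact zero_mem _
      | succ n ih =>
          intro c hcard hker
          have hsupp : ∀ j ∈ c.1.support, g0 j ≤ z := fun j hj =>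
            (Finsupp.mem_supported k c.1).1 c.2 hj
          by_cases hsmall : c.1.support.card ≤ ω
          · have hz''z : c.1.support.sup g0 ≤ z := Finset.sup_le hsupp
            have hnorm : sumNorm (c.1.support.sup g0) ≤ 2 ^ ω * m := by
              calc sumNorm (c.1.support.sup g0) ≤ ∑ j ∈ c.1.support, sumNorm (g0 j) :=
                    sumNorm_finsetSup_le _ _
                _ ≤ ∑ _j ∈ c.1.support, m := Finset.sum_le_sum (fun j _ => j.1.2)
                _ = c.1.support.card * m := by rw [Finset.sum_const, smul_eq_mul]
                _ ≤ ω * m := Nat.mul_le_mul_right m hsmall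
                _ ≤ 2 ^ ω * m := Nat.mul_le_mul_right m (Nat.lt_two_pow_self (n := ω)).le
            have hl : c.1 ∈ Finsupp.supported k k {j : ι0 | g0 j ≤ c.1.support.sup g0} :=
              (Finsupp.mem_supported k c.1).2
                (fun j hj => show g0 j ≤ _ from Finset.le_sup hj)
            exact push (c.1.support.sup g0) hnorm hz''z c.1 hl hker
          · push_neg at hsmall
            obtain ⟨T, hTsub, hTcard⟩ := Finset.exists_subset_card_eq (s := c.1.support) (n := ω + 1) hsmall
            let v : {j // j ∈ T} → W.obj z := fun j =>
              W.map (homOfLE (hsupp j.1 (hTsub j.2))) j.1.2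
            have hdepT : ¬ LinearIndependent k v :=
              W_dep W P ρ ω x incl hρ hPc z _ v
                (by rw [Fintype.card_coe, hTcard]; exact Nat.lt_succ_self ω)
            obtain ⟨gg, hgg, j0, hj0⟩ := Fintype.not_linearIndependent_iff.1 hdepT
            let l : ι0 →₀ k := Finsupp.onFinset T
              (fun j => if h : j ∈ T then gg ⟨j, h⟩ else 0)
              (fun j hj => by by_contra hmem; exact hj (dif_neg hmem))
            have hlval : ∀ (j : ι0) (hj : j ∈ T), l j = gg ⟨j, hj⟩ := fun j hj => by
              show (if h : j ∈ T then gg ⟨j, h⟩ else 0) = _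
              rw [dif_pos hj]
            have hlsupp : l.support ⊆ T := Finsupp.support_onFinset_subset
            have hlz : l ∈ Finsupp.supported k k {j : ι0 | g0 j ≤ z} :=
              (Finsupp.mem_supported k l).2 (fun j hj => hsupp j (hTsub (hlsupp hj)))
            have hpl : p.app z ⟨l, hlz⟩ = 0 := by
              erw [freeDescNat_apply]
              rw [Finsupp.sum_of_support_subset _ hlsupp _
                (fun j _ => by split <;> simp)]
              have hstep : (∑ j ∈ T, if h : g0 j ≤ z then l j • W.map (homOfLE h) j.2 else 0)
                  = ∑ j ∈ T.attach, gg j • v j := by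
                rw [← Finset.sum_attach T
                  (fun j => if h : g0 j ≤ z then l j • W.map (homOfLE h) j.2 else 0)]
                refine Finset.sum_congr rfl fun j _ => ?_
                rw [dif_pos (hsupp j.1 (hTsub j.2)), hlval j.1 j.2]
              rw [hstep, ← Finset.univ_eq_attach]
              exact hgg
            have hlj0 : l ↑j0 ≠ 0 := by
              rw [hlval ↑j0 j0.2]
              simpa using hj0
            set a : k := c.1 ↑j0 * (l ↑j0)⁻¹ with ha
            set ee : ι0 →₀ k := c.1 - a • l with hee
            have hesupp : ee.support ⊆ c.1.support := by
              refine (Finsupp.support_sub).trans (Finset.union_subset le_rfl ?_)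
              exact (Finsupp.support_smul).trans (hlsupp.trans hTsub)
            have hej0 : ee ↑j0 = 0 := by
              rw [hee, Finsupp.sub_apply, Finsupp.smul_apply, smul_eq_mul, ha,
                mul_assoc, inv_mul_cancel₀ hlj0, mul_one, sub_self]
            have hecard : ee.support.card ≤ n := by
              have hlt : ee.support.card < c.1.support.card :=
                Finset.card_lt_card ⟨hesupp, fun hcs =>
                  (Finsupp.mem_support_iff.1 (hcs (hTsub j0.2))) hej0⟩
              omega
            have hez : ee ∈ Finsupp.supported k k {j : ι0 | g0 j ≤ z} :=
              (Finsupp.mem_supported k ee).2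
                (fun j hj => hsupp j (hesupp hj))
            let eeQ : ↑(Q0.obj z) := ⟨ee, hez⟩
            let lQ : ↑(Q0.obj z) := ⟨l, hlz⟩
            have heker : p.app z eeQ = 0 := by
              have hsplit : eeQ = c - a • lQ := Subtype.ext rfl
              have hpl' : p.app z lQ = 0 := hpl
              rw [hsplit, map_sub, map_smul, hker, hpl', smul_zero, sub_zero]
            have hein : eeQ ∈ LinearMap.range (d.app z).hom :=
              ih eeQ hecard heker
            have hz''z : T.sup g0 ≤ z := Finset.sup_le fun j hj => hsupp j (hTsub hj)
            have hnorm : sumNorm (T.sup g0) ≤ 2 ^ ω * m := by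
              calc sumNorm (T.sup g0) ≤ ∑ j ∈ T, sumNorm (g0 j) := sumNorm_finsetSup_le _ _
                _ ≤ ∑ _j ∈ T, m := Finset.sum_le_sum (fun j _ => j.1.2)
                _ = T.card * m := by rw [Finset.sum_const, smul_eq_mul]
                _ = (ω + 1) * m := by rw [hTcard]
                _ ≤ 2 ^ ω * m := Nat.mul_le_mul_right m (Nat.lt_two_pow_self (n := ω))
            have hlz'' : l ∈ Finsupp.supported k k {j : ι0 | g0 j ≤ T.sup g0} :=
              (Finsupp.mem_supported k l).2
                (fun j hj => show g0 j ≤ _ from Finset.le_sup (hlsupp hj))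
            have hlin : lQ ∈ LinearMap.range (d.app z).hom :=
              push (T.sup g0) hnorm hz''z l hlz'' hpl
            have hfin : c = eeQ + a • lQ := by
              apply Subtype.ext
              show c.1 = ee + a • l
              rw [hee, sub_add_cancel]
            rw [hfin]
            exact add_mem hein (Submodule.smul_mem _ a hlin)
    exact heart c.1.support.card c le_rfl (LinearMap.mem_ker.1 hc)
  · -- range ≤ ker
    have hcomp : (p.app z).hom.comp (d.app z).hom = 0 := by
      apply freeExt
      intro j hj
      show p.app z (d.app z (fe g1 j z hj)) = 0
      rw [freeDescNat_fe, pnat]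
      have : p.app (g1 j) ↑j.2 = 0 := LinearMap.mem_ker.1 j.2.2
      rw [this, map_zero]
    rintro u ⟨v, rfl⟩
    exact LinearMap.mem_ker.2 (DFunLike.congr_fun hcomp v)
end
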